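/- Let Φ be an n×d matrix, y = Φx* with s* = supp(x*). Let s be an index set of size k with e = |s* \ s| ≥ 1 and δ_k < 1. Then ‖Φ_{s* \ p}ᵀ y^{⊥s}‖₂ ≥ (1 − δ_e − δ_{k+e}²/(1 − δ_k)) ‖x*_{s* \ p}‖₂ − (δ_e + δ_{k+e}²/(1 − δ_k)) ‖x*_{s* ∩ l}‖₂, where l is any index set disjoint from s and p = s ∪ l (assuming s* \ p is nonempty). -/

import Mathlib

open Matrix Finset

noncomputable section

/-- Number of nonzero entries of a vector. -/
def sparsity {d : ℕ} (x : Fin d → ℝ) : ℕ :=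
  (Finset.univ.filter fun i => x i ≠ 0).card

/-- Squared Euclidean norm. -/
def nsq {k : Type*} [Fintype k] (v : k → ℝ) : ℝ := ∑ i, v i ^ 2

/-- Euclidean (ℓ₂) norm. -/
def l2 {k : Type*} [Fintype k] (v : k → ℝ) : ℝ := Real.sqrt (nsq v)

/-- `Φ` satisfies the order-`t` restricted isometry property with constant `δ`. -/
def satRIP {n d : ℕ} (Φ : Matrix (Fin n) (Fin d) ℝ) (t : ℕ) (δ : ℝ) : Prop :=
  ∀ x : Fin d → ℝ, sparsity x ≤ t →
    (1 - δ) * nsq x ≤ nsq (Φ.mulVec x) ∧ nsq (Φ.mulVec x) ≤ (1 + δ) * nsq x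

/-- The order-`t` RIP constant of `Φ` : the smallest `δ ≥ 0` satisfying the RIP bounds. -/
def ripConst {n d : ℕ} (Φ : Matrix (Fin n) (Fin d) ℝ) (t : ℕ) : ℝ :=
  sInf {δ : ℝ | 0 ≤ δ ∧ satRIP Φ t δ}

/-- The submatrix of `Φ` consisting of the columns indexed by `s`. -/
def cols {n d : ℕ} (Φ : Matrix (Fin n) (Fin d) ℝ) (s : Finset (Fin d)) :
    Matrix (Fin n) {i // i ∈ s} ℝ := Φ.submatrix id (fun i => (i : Fin d))

/-- Orthogonal projection `P{Φ_s} = Φ_s (Φ_sᵀ Φ_s)⁻¹ Φ_sᵀ` onto the column span of `Φ_s`. -/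
def proj {n d : ℕ} (Φ : Matrix (Fin n) (Fin d) ℝ) (s : Finset (Fin d)) :
    Matrix (Fin n) (Fin n) ℝ :=
  cols Φ s * ((cols Φ s)ᵀ * cols Φ s)⁻¹ * (cols Φ s)ᵀ

/-- Least-squares residual `v^{⊥s} = (I - P{Φ_s}) v`. -/
def residVec {n d : ℕ} (Φ : Matrix (Fin n) (Fin d) ℝ) (s : Finset (Fin d)) (y : Fin n → ℝ) :
    Fin n → ℝ := y - (proj Φ s).mulVec y

/-- The `i`-th column of `Φ`. -/
def col {n d : ℕ} (Φ : Matrix (Fin n) (Fin d) ℝ) (i : Fin d) : Fin n → ℝ := fun k => Φ k i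

/-- `x` is a least-squares estimate of `y` supported on `s`:
it is supported on `s` and minimizes `‖y - Φ z‖₂` over all `z` supported on `s`. -/
def leastSq {n d : ℕ} (Φ : Matrix (Fin n) (Fin d) ℝ) (y : Fin n → ℝ) (s : Finset (Fin d))
    (x : Fin d → ℝ) : Prop :=
  (∀ i, i ∉ s → x i = 0) ∧
  ∀ z : Fin d → ℝ, (∀ i, i ∉ s → z i = 0) → nsq (y - Φ.mulVec x) ≤ nsq (y - Φ.mulVec z)

/-- The support of a vector, as a `Finset`. -/
def spt {d : ℕ} (x : Fin d → ℝ) : Finset (Fin d) :=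
  Finset.univ.filter fun i => x i ≠ 0

-- Auxiliary lemmas
section aux

variable {m k : Type*} [Fintype k]

lemma nsq_nonneg (v : k → ℝ) : 0 ≤ nsq v := Finset.sum_nonneg fun i _ => sq_nonneg _

lemma l2_nonneg (v : k → ℝ) : 0 ≤ l2 v := Real.sqrt_nonneg _

lemma l2_sq (v : k → ℝ) : l2 v ^ 2 = nsq v := Real.sq_sqrt (nsq_nonneg v)

lemma nsq_eq_dot (v : k → ℝ) : nsq v = v ⬝ᵥ v := by
  simp [nsq, dotProduct, sq]

lemma dot_le_l2 (u v : k → ℝ) : u ⬝ᵥ v ≤ l2 u * l2 v := by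
  have h := Finset.sum_mul_sq_le_sq_mul_sq Finset.univ u v
  have h2 : u ⬝ᵥ v ≤ |u ⬝ᵥ v| := le_abs_self _
  refine h2.trans ?_
  rw [← Real.sqrt_sq_eq_abs]
  calc Real.sqrt ((u ⬝ᵥ v)^2) ≤ Real.sqrt (nsq u * nsq v) := by
        apply Real.sqrt_le_sqrt; simpa [dotProduct, nsq] using h
    _ = l2 u * l2 v := Real.sqrt_mul (nsq_nonneg u) _

lemma l2_triangle (u v : k → ℝ) : l2 (u + v) ≤ l2 u + l2 v := by
  have h : nsq (u + v) ≤ (l2 u + l2 v) ^ 2 := by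
    have : nsq (u + v) = nsq u + 2 * (u ⬝ᵥ v) + nsq v := by
      simp only [nsq, dotProduct, Finset.mul_sum, ← Finset.sum_add_distrib, Pi.add_apply]
      congr 1; funext i; ring
    rw [this]
    have := dot_le_l2 u v
    nlinarith [l2_sq u, l2_sq v, l2_nonneg u, l2_nonneg v]
  calc l2 (u+v) = Real.sqrt (nsq (u+v)) := rfl
    _ ≤ Real.sqrt ((l2 u + l2 v)^2) := Real.sqrt_le_sqrt h
    _ = l2 u + l2 v := Real.sqrt_sq (add_nonneg (l2_nonneg u) (l2_nonneg v))

lemma l2_neg (v : k → ℝ) : l2 (-v) = l2 v := by simp [l2, nsq]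

lemma l2_eq_zero {v : k → ℝ} (h : l2 v = 0) : v = 0 := by
  have : nsq v = 0 := by rw [← l2_sq, h]; ring
  funext i
  have := Finset.sum_eq_zero_iff_of_nonneg (fun i _ => sq_nonneg (v i)) |>.mp this i (Finset.mem_univ i)
  exact pow_eq_zero_iff (n := 2) (by norm_num) |>.mp this

lemma l2_smul (c : ℝ) (v : k → ℝ) : l2 (c • v) = |c| * l2 v := by
  simp [l2, nsq, mul_pow, ← Finset.mul_sum, Real.sqrt_mul (sq_nonneg c), Real.sqrt_sq_eq_abs]

-- RIP const facts
variable {n d : ℕ} (Φ : Matrix (Fin n) (Fin d) ℝ)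

lemma ripSet_nonempty (t : ℕ) : ∃ δ, 0 ≤ δ ∧ satRIP Φ t δ := by
  classical
  set M : ℝ := ∑ p : Fin n, ∑ j : Fin d, Φ p j ^ 2 with hM
  have hM0 : 0 ≤ M := Finset.sum_nonneg fun _ _ => Finset.sum_nonneg fun _ _ => sq_nonneg _
  refine ⟨M + 1, by positivity, fun x _ => ?_⟩
  have hub : nsq (Φ.mulVec x) ≤ M * nsq x := by
    rw [nsq]
    calc ∑ p, (Φ.mulVec x p) ^ 2 ≤ ∑ p, (∑ j, Φ p j ^ 2) * nsq x := by
          apply Finset.sum_le_sum; intro p _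
          have := Finset.sum_mul_sq_le_sq_mul_sq Finset.univ (fun j => Φ p j) x
          simpa [Matrix.mulVec, dotProduct, nsq] using this
      _ = M * nsq x := by rw [← Finset.sum_mul]
  constructor
  · nlinarith [nsq_nonneg (Φ.mulVec x), nsq_nonneg x]
  · nlinarith [nsq_nonneg x]

lemma satRIP_ripConst (t : ℕ) : 0 ≤ ripConst Φ t ∧ satRIP Φ t (ripConst Φ t) := by
  classical
  have hne : {δ : ℝ | 0 ≤ δ ∧ satRIP Φ t δ}.Nonempty := ripSet_nonempty Φ t
  have hbdd : BddBelow {δ : ℝ | 0 ≤ δ ∧ satRIP Φ t δ} := ⟨0, fun δ hδ => hδ.1⟩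
  have hclosed : IsClosed {δ : ℝ | 0 ≤ δ ∧ satRIP Φ t δ} := by
    have : {δ : ℝ | 0 ≤ δ ∧ satRIP Φ t δ} =
        Set.Ici 0 ∩ ⋂ x ∈ {x : Fin d → ℝ | sparsity x ≤ t},
          ({δ : ℝ | (1 - δ) * nsq x ≤ nsq (Φ.mulVec x)} ∩
           {δ : ℝ | nsq (Φ.mulVec x) ≤ (1 + δ) * nsq x}) := by
      ext δ
      simp only [Set.mem_inter_iff, Set.mem_Ici, Set.mem_iInter, Set.mem_setOf_eq, satRIP]
    rw [this]
    refine IsClosed.inter isClosed_Ici ?_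
    refine isClosed_biInter fun x _ => IsClosed.inter ?_ ?_
    · exact isClosed_le (by continuity) continuous_const
    · exact isClosed_le continuous_const (by continuity)
  exact hclosed.csInf_mem hne hbdd


end aux
/-- Restriction of a vector to a finset. -/
def res {d : ℕ} (a : Finset (Fin d)) (x : Fin d → ℝ) : Fin d → ℝ :=
  fun i => if i ∈ a then x i else 0

variable {k' : Type*} [Fintype k']

lemma nsq_smul (c : ℝ) (v : k' → ℝ) : nsq (c • v) = c ^ 2 * nsq v := by
  simp [nsq, mul_pow, Finset.mul_sum]

lemma nsq_parallelogram (a b : k' → ℝ) : nsq (a + b) - nsq (a - b) = 4 * (a ⬝ᵥ b) := by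
  simp only [nsq, dotProduct, Pi.add_apply, Pi.sub_apply, Finset.mul_sum,
    ← Finset.sum_sub_distrib]
  congr 1; funext i; ring

lemma nsq_add_sub (a b : k' → ℝ) : nsq (a + b) + nsq (a - b) = 2 * (nsq a + nsq b) := by
  simp only [nsq, Pi.add_apply, Pi.sub_apply, mul_add, Finset.mul_sum,
    ← Finset.sum_add_distrib]
  congr 1; funext i; ring

variable {n d : ℕ} (Φ : Matrix (Fin n) (Fin d) ℝ)

lemma sparsity_le {x : Fin d → ℝ} {T : Finset (Fin d)} (hx : ∀ i ∉ T, x i = 0) :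
    sparsity x ≤ T.card := by
  apply Finset.card_le_card
  intro i hi
  simp only [sparsity, Finset.mem_filter, Finset.mem_univ, true_and] at hi
  by_contra h; exact hi (hx i h)

lemma rip_abs {t : ℕ} {δ : ℝ} (h : satRIP Φ t δ) {x : Fin d → ℝ} (hx : sparsity x ≤ t) :
    |nsq (Φ.mulVec x) - nsq x| ≤ δ * nsq x := by
  obtain ⟨h1, h2⟩ := h x hx
  rw [abs_le]; constructor <;> nlinarith [nsq_nonneg x]

lemma polar_aux {t : ℕ} {δ : ℝ} (h : satRIP Φ t δ)
    {u v : Fin d → ℝ} {T : Finset (Fin d)} (hT : T.card ≤ t)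
    (hu : ∀ i ∉ T, u i = 0) (hv : ∀ i ∉ T, v i = 0) :
    |Φ.mulVec u ⬝ᵥ Φ.mulVec v - u ⬝ᵥ v| ≤ δ / 2 * (nsq u + nsq v) := by
  have hadd : ∀ i ∉ T, (u + v) i = 0 := fun i hi => by simp [hu i hi, hv i hi]
  have hsub : ∀ i ∉ T, (u - v) i = 0 := fun i hi => by simp [hu i hi, hv i hi]
  have h1 := rip_abs Φ h ((sparsity_le hadd).trans hT)
  have h2 := rip_abs Φ h ((sparsity_le hsub).trans hT)
  have e1 : Φ.mulVec (u + v) = Φ.mulVec u + Φ.mulVec v := Matrix.mulVec_add Φ u v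
  have e2 : Φ.mulVec (u - v) = Φ.mulVec u - Φ.mulVec v := Matrix.mulVec_sub Φ u v
  rw [e1] at h1; rw [e2] at h2
  have p1 := nsq_parallelogram (Φ.mulVec u) (Φ.mulVec v)
  have p2 := nsq_parallelogram u v
  have p3 := nsq_add_sub u v
  rw [abs_le] at h1 h2 ⊢
  have p4 : δ * (nsq (u + v) + nsq (u - v)) = δ * (2 * (nsq u + nsq v)) := by rw [p3]
  constructor <;> linarith [h1.1, h1.2, h2.1, h2.2]

lemma polar {t : ℕ} {δ : ℝ} (h : satRIP Φ t δ) (hδ : 0 ≤ δ)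
    {u v : Fin d → ℝ} {T : Finset (Fin d)} (hT : T.card ≤ t)
    (hu : ∀ i ∉ T, u i = 0) (hv : ∀ i ∉ T, v i = 0) :
    |Φ.mulVec u ⬝ᵥ Φ.mulVec v - u ⬝ᵥ v| ≤ δ * l2 u * l2 v := by
  have l2z : l2 (0 : Fin d → ℝ) = 0 := by simp [l2, nsq]
  rcases eq_or_ne (l2 u) 0 with h0 | h0
  · rw [l2_eq_zero h0]; simp [Matrix.mulVec_zero, l2z]
  rcases eq_or_ne (l2 v) 0 with h0' | h0'
  · rw [l2_eq_zero h0']; simp [Matrix.mulVec_zero, l2z]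
  have hu0 : 0 < l2 u := lt_of_le_of_ne (l2_nonneg u) (Ne.symm h0)
  have hv0 : 0 < l2 v := lt_of_le_of_ne (l2_nonneg v) (Ne.symm h0')
  set c : ℝ := Real.sqrt (l2 v / l2 u) with hc
  have hcpos : 0 < c := Real.sqrt_pos.2 (div_pos hv0 hu0)
  have hc2 : c ^ 2 = l2 v / l2 u := Real.sq_sqrt (le_of_lt (div_pos hv0 hu0))
  have hu' : ∀ i ∉ T, (c • u) i = 0 := fun i hi => by simp [hu i hi]
  have hv' : ∀ i ∉ T, (c⁻¹ • v) i = 0 := fun i hi => by simp [hv i hi]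
  have key := polar_aux Φ h hT hu' hv'
  have e1 : Φ.mulVec (c • u) = c • Φ.mulVec u := Matrix.mulVec_smul Φ c u
  have e2 : Φ.mulVec (c⁻¹ • v) = c⁻¹ • Φ.mulVec v := Matrix.mulVec_smul Φ c⁻¹ v
  rw [e1, e2] at key
  have d1 : (c • Φ.mulVec u) ⬝ᵥ (c⁻¹ • Φ.mulVec v) = Φ.mulVec u ⬝ᵥ Φ.mulVec v := by
    rw [smul_dotProduct, dotProduct_smul]
    rw [smul_smul, mul_inv_cancel₀ hcpos.ne', one_smul]
  have d2 : (c • u) ⬝ᵥ (c⁻¹ • v) = u ⬝ᵥ v := by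
    rw [smul_dotProduct, dotProduct_smul]
    rw [smul_smul, mul_inv_cancel₀ hcpos.ne', one_smul]
  rw [d1, d2, nsq_smul, nsq_smul] at key
  have hcc : c ^ 2 * nsq u = l2 v * l2 u := by
    rw [hc2, ← l2_sq u]; field_simp
  have hcc' : c⁻¹ ^ 2 * nsq v = l2 u * l2 v := by
    rw [inv_pow, hc2, ← l2_sq v]
    field_simp
  rw [hcc, hcc'] at key
  calc |Φ.mulVec u ⬝ᵥ Φ.mulVec v - u ⬝ᵥ v| ≤ δ / 2 * (l2 v * l2 u + l2 u * l2 v) := key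
    _ = δ * l2 u * l2 v := by ring

lemma adj (z : Fin d → ℝ) (w : Fin n → ℝ) :
    Φ.mulVec z ⬝ᵥ w = z ⬝ᵥ (fun i => _root_.col Φ i ⬝ᵥ w) := by
  simp only [Matrix.mulVec, dotProduct, Finset.sum_mul, Finset.mul_sum]
  rw [Finset.sum_comm]
  apply Finset.sum_congr rfl; intro i _
  apply Finset.sum_congr rfl; intro p _
  show Φ p i * z i * w p = z i * (Φ p i * w p)
  ring

lemma corr_bound {t : ℕ} {δ : ℝ} (h : satRIP Φ t δ) (hδ : 0 ≤ δ)
    (q T : Finset (Fin d)) (hcard : (q ∪ T).card ≤ t)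
    {v : Fin d → ℝ} (hv : ∀ i ∉ T, v i = 0) :
    l2 (res q (fun i => _root_.col Φ i ⬝ᵥ Φ.mulVec v) - res q v) ≤ δ * l2 v := by
  set z := res q (fun i => _root_.col Φ i ⬝ᵥ Φ.mulVec v) - res q v with hz
  have hzsupp : ∀ i ∉ q, z i = 0 := by intro i hi; simp [hz, res, hi]
  have h1 : nsq z = z ⬝ᵥ ((fun i => _root_.col Φ i ⬝ᵥ Φ.mulVec v) - v) := by
    rw [nsq_eq_dot]
    apply Finset.sum_congr rfl
    intro i _
    by_cases hi : i ∈ q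
    · have : z i = _root_.col Φ i ⬝ᵥ Φ.mulVec v - v i := by simp [hz, res, hi]
      rw [this]; simp
    · rw [hzsupp i hi]; ring
  have h2 : z ⬝ᵥ ((fun i => _root_.col Φ i ⬝ᵥ Φ.mulVec v) - v) =
      Φ.mulVec z ⬝ᵥ Φ.mulVec v - z ⬝ᵥ v := by
    rw [dotProduct_sub, ← adj]
  have hzT : ∀ i ∉ q ∪ T, z i = 0 := fun i hi =>
    hzsupp i (fun h' => hi (Finset.mem_union_left _ h'))
  have hvT : ∀ i ∉ q ∪ T, v i = 0 := fun i hi =>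
    hv i (fun h' => hi (Finset.mem_union_right _ h'))
  have h3 := polar Φ h hδ hcard hzT hvT
  have h4 : nsq z ≤ δ * l2 z * l2 v := by
    rw [h1, h2]
    exact (le_abs_self _).trans (h3.trans (le_of_eq (by ring)))
  rw [← l2_sq] at h4
  rcases eq_or_ne (l2 z) 0 with h0 | h0
  · rw [h0]; exact mul_nonneg hδ (l2_nonneg v)
  have hz0 : 0 < l2 z := lt_of_le_of_ne (l2_nonneg z) (Ne.symm h0)
  nlinarith

lemma corr_bound' {t : ℕ} {δ : ℝ} (h : satRIP Φ t δ) (hδ : 0 ≤ δ)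
    (q T : Finset (Fin d)) (hcard : (q ∪ T).card ≤ t) (hdisj : Disjoint q T)
    {v : Fin d → ℝ} (hv : ∀ i ∉ T, v i = 0) :
    l2 (res q (fun i => _root_.col Φ i ⬝ᵥ Φ.mulVec v)) ≤ δ * l2 v := by
  have hres : res q v = 0 := by
    funext i
    by_cases hi : i ∈ q
    · have : i ∉ T := fun hT => (Finset.disjoint_left.mp hdisj) hi hT
      simp [res, hi, hv i this]
    · simp [res, hi]
  have := corr_bound Φ h hδ q T hcard hv
  rwa [hres, sub_zero] at this

/-- Extend a vector on a subtype to `Fin d`, zero outside. -/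
def extv {d : ℕ} (s : Finset (Fin d)) (w : {i // i ∈ s} → ℝ) : Fin d → ℝ :=
  fun i => if h : i ∈ s then w ⟨i, h⟩ else 0

section proj

variable {n d : ℕ} (Φ : Matrix (Fin n) (Fin d) ℝ) (s : Finset (Fin d))

lemma extv_supp (w : {i // i ∈ s} → ℝ) : ∀ i ∉ s, extv s w i = 0 :=
  fun i hi => by simp [extv, hi]

lemma cols_mulVec (w : {i // i ∈ s} → ℝ) :
    (cols Φ s).mulVec w = Φ.mulVec (extv s w) := by
  funext p
  show ∑ j : {i // i ∈ s}, Φ p (j : Fin d) * w j = ∑ i : Fin d, Φ p i * extv s w i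
  rw [show ∑ i : Fin d, Φ p i * extv s w i = ∑ i ∈ s, Φ p i * extv s w i from
    (Finset.sum_subset (Finset.subset_univ s) (fun i _ hi => by simp [extv, hi])).symm]
  rw [← Finset.sum_coe_sort s (fun i => Φ p i * extv s w i)]
  apply Finset.sum_congr rfl
  intro j _
  simp [extv, j.2]

lemma nsq_extv (w : {i // i ∈ s} → ℝ) : nsq (extv s w) = nsq w := by
  show ∑ i : Fin d, extv s w i ^ 2 = ∑ j : {i // i ∈ s}, w j ^ 2
  rw [show ∑ i : Fin d, extv s w i ^ 2 = ∑ i ∈ s, extv s w i ^ 2 from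
    (Finset.sum_subset (Finset.subset_univ s) (fun i _ hi => by simp [extv, hi])).symm]
  rw [← Finset.sum_coe_sort s (fun i => extv s w i ^ 2)]
  apply Finset.sum_congr rfl
  intro j _
  simp [extv, j.2]

lemma l2_extv (w : {i // i ∈ s} → ℝ) : l2 (extv s w) = l2 w := by
  rw [l2, l2, nsq_extv]

lemma nsq_restrict (g : Fin d → ℝ) :
    nsq (fun j : {i // i ∈ s} => g (j : Fin d)) = nsq (res s g) := by
  show ∑ j : {i // i ∈ s}, g (j : Fin d) ^ 2 = ∑ i : Fin d, res s g i ^ 2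
  rw [show ∑ i : Fin d, res s g i ^ 2 = ∑ i ∈ s, res s g i ^ 2 from
    (Finset.sum_subset (Finset.subset_univ s) (fun i _ hi => by simp [res, hi])).symm]
  rw [← Finset.sum_coe_sort s (fun i => res s g i ^ 2)]
  apply Finset.sum_congr rfl
  intro j _
  simp [res, j.2]

lemma colApp (i : Fin d) (p : Fin n) : _root_.col Φ i p = Φ p i := rfl

lemma colsT_mulVec (y : Fin n → ℝ) (j : {i // i ∈ s}) :
    (cols Φ s)ᵀ.mulVec y j = _root_.col Φ (j : Fin d) ⬝ᵥ y := by
  simp [Matrix.mulVec, dotProduct, cols, colApp, Matrix.transpose_apply, Matrix.submatrix_apply]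

lemma quad_form (x : {i // i ∈ s} → ℝ) :
    x ⬝ᵥ ((cols Φ s)ᵀ * cols Φ s).mulVec x = (cols Φ s).mulVec x ⬝ᵥ (cols Φ s).mulVec x := by
  rw [← Matrix.mulVec_mulVec, Matrix.mulVec_transpose, dotProduct_comm,
    ← Matrix.dotProduct_mulVec]

end proj

lemma nsq_pos {k' : Type*} [Fintype k'] {v : k' → ℝ} (h : v ≠ 0) : 0 < nsq v := by
  rcases lt_or_eq_of_le (nsq_nonneg v) with h1 | h1
  · exact h1
  · exact absurd (l2_eq_zero (by rw [l2, ← h1, Real.sqrt_zero])) h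

section projbound

variable {n d : ℕ} (Φ : Matrix (Fin n) (Fin d) ℝ) (s : Finset (Fin d))

lemma proj_bound {k e' : ℕ} {δk δ : ℝ}
    (hk : satRIP Φ k δk) (hδk1 : δk < 1) (hδ : 0 ≤ δ) (hke : satRIP Φ (k + e') δ)
    (hs : s.card = k)
    (q T : Finset (Fin d)) (hqs : Disjoint q s) (hTs : Disjoint T s)
    (hq : (q ∪ s).card ≤ k + e') (hT : (T ∪ s).card ≤ k + e')
    {v : Fin d → ℝ} (hv : ∀ i ∉ T, v i = 0) :
    l2 (res q (fun i => _root_.col Φ i ⬝ᵥ (proj Φ s).mulVec (Φ.mulVec v))) ≤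
      δ * δ / (1 - δk) * l2 v := by
  classical
  have h1mk : 0 < 1 - δk := by linarith
  -- positive definiteness of the Gram matrix
  have hGpos : ((cols Φ s)ᵀ * cols Φ s).PosDef := by
    refine Matrix.PosDef.of_dotProduct_mulVec_pos ?_ ?_
    · exact Matrix.isHermitian_conjTranspose_mul_self (cols Φ s)
    · intro x hx
      have h1 : star x ⬝ᵥ ((cols Φ s)ᵀ * cols Φ s).mulVec x = nsq (Φ.mulVec (extv s x)) := by
        rw [star_trivial, quad_form, ← nsq_eq_dot, cols_mulVec]
      rw [h1]
      have hsp : sparsity (extv s x) ≤ k := hs ▸ sparsity_le (extv_supp s x)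
      have h2 := (hk _ hsp).1
      rw [nsq_extv] at h2
      nlinarith [nsq_pos hx]
  have hdet : IsUnit ((cols Φ s)ᵀ * cols Φ s).det :=
    isUnit_iff_ne_zero.mpr hGpos.det_pos.ne'
  have hinv : ((cols Φ s)ᵀ * cols Φ s) * ((cols Φ s)ᵀ * cols Φ s)⁻¹ = 1 :=
    Matrix.mul_nonsing_inv _ hdet
  set z0 : {i // i ∈ s} → ℝ := (cols Φ s)ᵀ.mulVec (Φ.mulVec v) with hz0
  set w : {i // i ∈ s} → ℝ := ((cols Φ s)ᵀ * cols Φ s)⁻¹.mulVec z0 with hw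
  have hP : (proj Φ s).mulVec (Φ.mulVec v) = Φ.mulVec (extv s w) := by
    rw [← cols_mulVec, hw, hz0, proj]
    simp only [Matrix.mulVec_mulVec, Matrix.mul_assoc]
  have hGw : ((cols Φ s)ᵀ * cols Φ s).mulVec w = z0 := by
    rw [hw, Matrix.mulVec_mulVec, hinv, Matrix.one_mulVec]
  have hz0norm : l2 z0 ≤ δ * l2 v := by
    have hz0e : z0 = fun j : {i // i ∈ s} =>
        (fun i => _root_.col Φ i ⬝ᵥ Φ.mulVec v) (j : Fin d) := by
      funext j; rw [hz0]; exact colsT_mulVec Φ s _ j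
    have he1 : nsq z0 = nsq (res s (fun i => _root_.col Φ i ⬝ᵥ Φ.mulVec v)) := by
      rw [hz0e]; exact nsq_restrict s (fun i => _root_.col Φ i ⬝ᵥ Φ.mulVec v)
    have hb := corr_bound' Φ hke hδ s T (by rwa [Finset.union_comm]) hTs.symm hv
    calc l2 z0 = l2 (res s (fun i => _root_.col Φ i ⬝ᵥ Φ.mulVec v)) := by rw [l2, l2, he1]
      _ ≤ δ * l2 v := hb
  have hlw : l2 w ≤ l2 z0 / (1 - δk) := by
    have hsp : sparsity (extv s w) ≤ k := hs ▸ sparsity_le (extv_supp s w)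
    have h2 := (hk _ hsp).1
    rw [nsq_extv] at h2
    have h3 : nsq (Φ.mulVec (extv s w)) = w ⬝ᵥ z0 := by
      rw [← cols_mulVec, nsq_eq_dot, ← quad_form Φ s w, hGw]
    rw [h3] at h2
    have h4 : w ⬝ᵥ z0 ≤ l2 w * l2 z0 := dot_le_l2 w z0
    rcases eq_or_ne (l2 w) 0 with h0 | h0
    · rw [h0]; exact div_nonneg (l2_nonneg z0) h1mk.le
    have hw0 : 0 < l2 w := lt_of_le_of_ne (l2_nonneg w) (Ne.symm h0)
    rw [le_div_iff₀ h1mk]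
    have := l2_sq w
    nlinarith
  rw [hP]
  have hfinal := corr_bound' Φ hke hδ q s hq hqs (extv_supp s w)
  rw [l2_extv] at hfinal
  calc l2 (res q (fun i => _root_.col Φ i ⬝ᵥ Φ.mulVec (extv s w))) ≤ δ * l2 w := hfinal
    _ ≤ δ * (l2 z0 / (1 - δk)) := mul_le_mul_of_nonneg_left hlw hδ
    _ ≤ δ * ((δ * l2 v) / (1 - δk)) := by gcongr
    _ = δ * δ / (1 - δk) * l2 v := by field_simp

end projbound

section final

variable {n d : ℕ} (Φ : Matrix (Fin n) (Fin d) ℝ) (s : Finset (Fin d))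

lemma proj_fix {k : ℕ} {δk : ℝ} (hk : satRIP Φ k δk) (hδk1 : δk < 1) (hs : s.card = k)
    {v : Fin d → ℝ} (hv : ∀ i ∉ s, v i = 0) :
    (proj Φ s).mulVec (Φ.mulVec v) = Φ.mulVec v := by
  classical
  have hGpos : ((cols Φ s)ᵀ * cols Φ s).PosDef := by
    refine Matrix.PosDef.of_dotProduct_mulVec_pos ?_ ?_
    · exact Matrix.isHermitian_conjTranspose_mul_self (cols Φ s)
    · intro x hx
      have h1 : star x ⬝ᵥ ((cols Φ s)ᵀ * cols Φ s).mulVec x = nsq (Φ.mulVec (extv s x)) := by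
        rw [star_trivial, quad_form, ← nsq_eq_dot, cols_mulVec]
      rw [h1]
      have hsp : sparsity (extv s x) ≤ k := hs ▸ sparsity_le (extv_supp s x)
      have h2 := (hk _ hsp).1
      rw [nsq_extv] at h2
      nlinarith [nsq_pos hx]
  have hdet : IsUnit ((cols Φ s)ᵀ * cols Φ s).det :=
    isUnit_iff_ne_zero.mpr hGpos.det_pos.ne'
  have hinv : ((cols Φ s)ᵀ * cols Φ s)⁻¹ * ((cols Φ s)ᵀ * cols Φ s) = 1 :=
    Matrix.nonsing_inv_mul _ hdet
  have hveq : v = extv s (fun j : {i // i ∈ s} => v (j : Fin d)) := by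
    funext i
    by_cases hi : i ∈ s
    · simp [extv, hi]
    · simp [extv, hi, hv i hi]
  rw [hveq, ← cols_mulVec, proj]
  simp only [Matrix.mulVec_mulVec, Matrix.mul_assoc]
  rw [hinv, Matrix.mul_one]

lemma l2_res (t : Finset (Fin d)) (g : Fin d → ℝ) :
    Real.sqrt (∑ i ∈ t, g i ^ 2) = l2 (res t g) := by
  have h1 : ∑ i ∈ t, g i ^ 2 = ∑ i ∈ t, res t g i ^ 2 :=
    Finset.sum_congr rfl (fun i hi => by simp [res, hi])
  have h2 : ∑ i ∈ t, res t g i ^ 2 = ∑ i : Fin d, res t g i ^ 2 :=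
    Finset.sum_subset (Finset.subset_univ t) (fun i _ hi => by simp [res, hi])
  rw [l2, nsq, h1, h2]

end final

/-- lower bound on the correlation of the missed true features with
the residual. -/
theorem stmt10 {n d : ℕ} (Φ : Matrix (Fin n) (Fin d) ℝ)
    (xs : Fin d → ℝ) (k e : ℕ)
    (s : Finset (Fin d)) (hs : s.card = k)
    (he : e = (spt xs \ s).card) (he1 : 1 ≤ e)
    (hδk : ripConst Φ k < 1)
    (l : Finset (Fin d)) (hdisj : Disjoint l s)
    (hnonempty : (spt xs \ (s ∪ l)).Nonempty) :
    (1 - ripConst Φ e - ripConst Φ (k + e) ^ 2 / (1 - ripConst Φ k)) *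
        Real.sqrt (∑ i ∈ spt xs \ (s ∪ l), xs i ^ 2) -
      (ripConst Φ e + ripConst Φ (k + e) ^ 2 / (1 - ripConst Φ k)) *
        Real.sqrt (∑ i ∈ spt xs ∩ l, xs i ^ 2) ≤
    Real.sqrt (∑ i ∈ spt xs \ (s ∪ l),
      (_root_.col Φ i ⬝ᵥ residVec Φ s (Φ.mulVec xs)) ^ 2) := by
  classical
  obtain ⟨hδe0, hsatE⟩ := satRIP_ripConst Φ e
  obtain ⟨hδk0, hsatK⟩ := satRIP_ripConst Φ k
  obtain ⟨hδke0, hsatKE⟩ := satRIP_ripConst Φ (k + e)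
  set δe := ripConst Φ e
  set δk' := ripConst Φ k
  set δke := ripConst Φ (k + e)
  have h1mk : 0 < 1 - δk' := by linarith
  set R := spt xs \ (s ∪ l) with hR
  set L := spt xs ∩ l with hL
  have hx0 : ∀ i, i ∉ spt xs → xs i = 0 := by
    intro i hi
    by_contra hne
    exact hi (by simp [spt, hne])
  have hRsub : R ⊆ spt xs \ s := by
    intro i hi
    rw [hR, Finset.mem_sdiff, Finset.mem_union] at hi
    rw [Finset.mem_sdiff]
    exact ⟨hi.1, fun h => hi.2 (Or.inl h)⟩
  have hLsub : L ⊆ spt xs \ s := by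
    intro i hi
    rw [hL, Finset.mem_inter] at hi
    rw [Finset.mem_sdiff]
    exact ⟨hi.1, fun h => Finset.disjoint_left.mp hdisj hi.2 h⟩
  have hRs : Disjoint R s := by
    rw [Finset.disjoint_left]
    intro i hi h
    exact ((Finset.mem_sdiff.mp (hRsub hi)).2) h
  have hLs : Disjoint L s := by
    rw [Finset.disjoint_left]
    intro i hi h
    exact ((Finset.mem_sdiff.mp (hLsub hi)).2) h
  have hRcard : R.card ≤ e := he ▸ Finset.card_le_card hRsub
  have hLcard : L.card ≤ e := he ▸ Finset.card_le_card hLsub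
  have hRScard : (R ∪ s).card ≤ k + e := by
    calc (R ∪ s).card ≤ R.card + s.card := Finset.card_union_le _ _
      _ ≤ e + k := by rw [hs]; exact Nat.add_le_add_right hRcard k
      _ = k + e := Nat.add_comm e k
  have hLScard : (L ∪ s).card ≤ k + e := by
    calc (L ∪ s).card ≤ L.card + s.card := Finset.card_union_le _ _
      _ ≤ e + k := by rw [hs]; exact Nat.add_le_add_right hLcard k
      _ = k + e := Nat.add_comm e k
  set u := res (spt xs \ s) xs with hu
  set a := res R xs with ha
  set b := res L xs with hb
  set w0 := res (spt xs ∩ s) xs with hw0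
  have hu_supp : ∀ i ∉ spt xs \ s, u i = 0 := fun i hi => by simp [hu, res, hi]
  have ha_supp : ∀ i ∉ R, a i = 0 := fun i hi => by simp [ha, res, hi]
  have hb_supp : ∀ i ∉ L, b i = 0 := fun i hi => by simp [hb, res, hi]
  have hw0_supp : ∀ i ∉ s, w0 i = 0 := by
    intro i hi
    have : i ∉ spt xs ∩ s := fun h => hi (Finset.mem_inter.mp h).2
    simp [hw0, res, this]
  have hab : u = a + b := by
    funext i
    show u i = a i + b i
    by_cases h1 : i ∈ spt xs
    · by_cases h2 : i ∈ s
      · have hiR : i ∉ R := fun h => (Finset.mem_sdiff.mp (hRsub h)).2 h2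
        have hiL : i ∉ L := fun h => (Finset.mem_sdiff.mp (hLsub h)).2 h2
        have hiU : i ∉ spt xs \ s := fun h => (Finset.mem_sdiff.mp h).2 h2
        simp [hu, ha, hb, res, hiR, hiL, hiU]
      · by_cases h3 : i ∈ l
        · have hiR : i ∉ R := by
            rw [hR, Finset.mem_sdiff, Finset.mem_union]; push_neg
            exact fun _ => Or.inr h3
          have hiL : i ∈ L := Finset.mem_inter.mpr ⟨h1, h3⟩
          have hiU : i ∈ spt xs \ s := Finset.mem_sdiff.mpr ⟨h1, h2⟩
          simp [hu, ha, hb, res, hiR, hiL, hiU]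
        · have hiR : i ∈ R := by
            rw [hR, Finset.mem_sdiff, Finset.mem_union]
            exact ⟨h1, fun h => h.elim h2 h3⟩
          have hiL : i ∉ L := fun h => h3 (Finset.mem_inter.mp h).2
          have hiU : i ∈ spt xs \ s := Finset.mem_sdiff.mpr ⟨h1, h2⟩
          simp [hu, ha, hb, res, hiR, hiL, hiU]
    · have h0 := hx0 i h1
      have hiR : i ∉ R := fun h => h1 (Finset.mem_sdiff.mp h).1
      have hiL : i ∉ L := fun h => h1 (Finset.mem_inter.mp h).1
      have hiU : i ∉ spt xs \ s := fun h => h1 (Finset.mem_sdiff.mp h).1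
      simp [hu, ha, hb, res, hiR, hiL, hiU]
  have hxs : xs = w0 + u := by
    funext i
    show xs i = w0 i + u i
    by_cases h1 : i ∈ spt xs
    · by_cases h2 : i ∈ s
      · have hiS : i ∈ spt xs ∩ s := Finset.mem_inter.mpr ⟨h1, h2⟩
        have hiU : i ∉ spt xs \ s := fun h => (Finset.mem_sdiff.mp h).2 h2
        simp [hw0, hu, res, hiS, hiU]
      · have hiS : i ∉ spt xs ∩ s := fun h => h2 (Finset.mem_inter.mp h).2
        have hiU : i ∈ spt xs \ s := Finset.mem_sdiff.mpr ⟨h1, h2⟩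
        simp [hw0, hu, res, hiS, hiU]
    · have h0 := hx0 i h1
      have hiS : i ∉ spt xs ∩ s := fun h => h1 (Finset.mem_inter.mp h).1
      have hiU : i ∉ spt xs \ s := fun h => h1 (Finset.mem_sdiff.mp h).1
      simp [hw0, hu, res, hiS, hiU, h0]
  -- residual reduction
  have hresid : residVec Φ s (Φ.mulVec xs) =
      Φ.mulVec u - (proj Φ s).mulVec (Φ.mulVec u) := by
    rw [residVec]
    have h1 : Φ.mulVec xs = Φ.mulVec w0 + Φ.mulVec u := by
      rw [hxs, Matrix.mulVec_add]
    rw [h1, Matrix.mulVec_add, proj_fix Φ s hsatK hδk hs hw0_supp]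
    abel
  -- key decomposition of the restricted correlation vector
  have hPu : (proj Φ s).mulVec (Φ.mulVec u) =
      (proj Φ s).mulVec (Φ.mulVec a) + (proj Φ s).mulVec (Φ.mulVec b) := by
    rw [hab, Matrix.mulVec_add, Matrix.mulVec_add]
  set Fu : Fin d → ℝ := fun i => _root_.col Φ i ⬝ᵥ Φ.mulVec u with hFu
  set Fa : Fin d → ℝ := fun i => _root_.col Φ i ⬝ᵥ (proj Φ s).mulVec (Φ.mulVec a) with hFa
  set Fb : Fin d → ℝ := fun i => _root_.col Φ i ⬝ᵥ (proj Φ s).mulVec (Φ.mulVec b) with hFb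
  have hru : ∀ i ∈ R, u i = xs i := by
    intro i hi
    have : i ∈ spt xs \ s := hRsub hi
    simp [hu, res, this]
  have hkey : res R (fun i => _root_.col Φ i ⬝ᵥ residVec Φ s (Φ.mulVec xs)) =
      a + (res R Fu - res R u) - res R Fa - res R Fb := by
    funext i
    show _ = a i + (res R Fu i - res R u i) - res R Fa i - res R Fb i
    by_cases hi : i ∈ R
    · have h1 : a i = xs i := by simp [ha, res, hi]
      have h2 : res R Fu i = Fu i := by simp [res, hi]
      have h3 : res R u i = u i := by simp [res, hi]
      have h4 : res R Fa i = Fa i := by simp [res, hi]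
      have h5 : res R Fb i = Fb i := by simp [res, hi]
      have h6 : res R (fun i => _root_.col Φ i ⬝ᵥ residVec Φ s (Φ.mulVec xs)) i =
          _root_.col Φ i ⬝ᵥ residVec Φ s (Φ.mulVec xs) := by simp [res, hi]
      rw [h1, h2, h3, h4, h5, h6, hresid, hPu, dotProduct_sub, dotProduct_add, hru i hi,
        hFu, hFa, hFb]
      ring
    · have h1 : a i = 0 := ha_supp i hi
      simp [res, hi, h1]
  -- norm bounds
  have hbA1 : l2 (res R Fu - res R u) ≤ δe * l2 u := by
    have hcard : (R ∪ (spt xs \ s)).card ≤ e := by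
      rw [Finset.union_eq_right.mpr hRsub]
      exact le_of_eq he.symm
    exact corr_bound Φ hsatE hδe0 R (spt xs \ s) hcard hu_supp
  have hbT2 : l2 (res R Fa) ≤ δke * δke / (1 - δk') * l2 a :=
    proj_bound Φ s hsatK hδk hδke0 hsatKE hs R R hRs hRs hRScard hRScard ha_supp
  have hbT3 : l2 (res R Fb) ≤ δke * δke / (1 - δk') * l2 b :=
    proj_bound Φ s hsatK hδk hδke0 hsatKE hs R L hRs hLs hRScard hLScard hb_supp
  have htri : l2 u ≤ l2 a + l2 b := by rw [hab]; exact l2_triangle a b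
  -- reverse triangle
  set Y := res R (fun i => _root_.col Φ i ⬝ᵥ residVec Φ s (Φ.mulVec xs)) with hY
  have hrev : l2 a - l2 (res R Fu - res R u) - l2 (res R Fa) - l2 (res R Fb) ≤ l2 Y := by
    have e1 : a = Y + (res R Fa + res R Fb - (res R Fu - res R u)) := by
      rw [hkey]; abel
    have e2 : l2 a ≤ l2 Y + l2 (res R Fa + res R Fb - (res R Fu - res R u)) := by
      rw [e1]; exact l2_triangle _ _
    have e3 : l2 (res R Fa + res R Fb - (res R Fu - res R u)) ≤
        l2 (res R Fa) + l2 (res R Fb) + l2 (res R Fu - res R u) := by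
      calc l2 (res R Fa + res R Fb - (res R Fu - res R u)) ≤
          l2 (res R Fa + res R Fb) + l2 (-(res R Fu - res R u)) := by
            rw [sub_eq_add_neg]; exact l2_triangle _ _
        _ ≤ l2 (res R Fa) + l2 (res R Fb) + l2 (res R Fu - res R u) := by
            rw [l2_neg]
            exact add_le_add (l2_triangle _ _) le_rfl
    linarith
  -- translate the goal
  rw [l2_res R xs, l2_res L xs, l2_res R (fun i => _root_.col Φ i ⬝ᵥ residVec Φ s (Φ.mulVec xs))]
  have hc2 : δke ^ 2 = δke * δke := sq δke
  rw [hc2]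
  have hmul := mul_le_mul_of_nonneg_left htri hδe0
  nlinarith [l2_nonneg a, l2_nonneg b, hbA1, hbT2, hbT3, hrev, hmul]
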